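/- Let T be an ordered tournament and S a feedback arc set such that reversing S gives the transitive ordering. If no arc of T lies in more than k directed triangles, then every backward arc e of T (with respect to this ordering) has length l(e) <= 2k+2. -/

import Mathlib

/-- A tournament: irreflexive, and exactly one arc between every pair of distinct vertices. -/
def IsTournament {V : Type*} (r : V → V → Prop) : Prop :=
  (∀ v, ¬ r v v) ∧ ∀ u v : V, u ≠ v → (r u v ↔ ¬ r v u)

/-- A digraph (given by its arc relation) is acyclic: no directed cycle. -/
def Acyclic {V : Type*} (r : V → V → Prop) : Prop :=
  ∀ v, ¬ Relation.TransGen r v v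

/-- If the backward arcs of an ordered tournament are exactly a feedback arc set `S` of
size at most `k` (whose reversal yields the given transitive ordering), and no arc lies
in more than `k` directed triangles, then every backward arc has length at most `2k+2`. -/
theorem stmt9 (n : ℕ) (r : Fin n → Fin n → Prop) (hT : IsTournament r) (k : ℕ)
    (S : Finset (Fin n × Fin n))
    (hS : ∀ a b : Fin n, (a, b) ∈ S ↔ r a b ∧ b < a)
    (hScard : S.card ≤ k)
    (htri : ∀ a b : Fin n, r a b → {w : Fin n | r b w ∧ r w a}.ncard ≤ k) :
    ∀ a b : Fin n, r a b → b < a → (a : ℕ) - b + 1 ≤ 2 * k + 2 := by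
  classical
  intro a b hab hba
  set W1 : Set (Fin n) := {w | w ∈ Set.Ioo b a ∧ r b w ∧ r w a} with hW1def
  set W2 : Set (Fin n) := {w | w ∈ Set.Ioo b a ∧ ¬ (r b w ∧ r w a)} with hW2def
  have hWcard : (Set.Ioo b a).ncard = (a : ℕ) - b - 1 := by
    rw [← Finset.coe_Ioo, Set.ncard_coe_finset, Fin.card_Ioo]
  have hsplit : Set.Ioo b a ⊆ W1 ∪ W2 := by
    intro w hw
    by_cases h : r b w ∧ r w a
    · exact Or.inl ⟨hw, h⟩
    · exact Or.inr ⟨hw, h⟩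
  have hW1 : W1.ncard ≤ k := by
    have hsub : W1 ⊆ {w : Fin n | r b w ∧ r w a} := fun w hw => hw.2
    exact le_trans (Set.ncard_le_ncard hsub (Set.toFinite _)) (htri a b hab)
  -- map W2 injectively into S
  have hW2 : W2.ncard ≤ k := by
    set f : Fin n → Fin n × Fin n := fun w => if r w b then (w, b) else (a, w) with hf
    have hmaps : ∀ w ∈ W2, f w ∈ (S : Set (Fin n × Fin n)) := by
      intro w hw
      obtain ⟨⟨hbw, hwa⟩, hnt⟩ := hw
      by_cases h : r w b
      · simp only [hf, if_pos h]
        exact (hS w b).mpr ⟨h, hbw⟩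
      · simp only [hf, if_neg h]
        have hbw' : r b w := (hT.2 b w (ne_of_lt hbw)).mpr (by
          intro hwb; exact h hwb)
        have hnwa : ¬ r w a := fun hwA => hnt ⟨hbw', hwA⟩
        have haw : r a w := (hT.2 a w (ne_of_gt hwa)).mpr hnwa
        exact (hS a w).mpr ⟨haw, hwa⟩
    have hinj : Set.InjOn f W2 := by
      intro w1 hw1 w2 hw2 heq
      have h1a : w1 < a := hw1.1.2
      have h2a : w2 < a := hw2.1.2
      by_cases h1 : r w1 b <;> by_cases h2 : r w2 b <;>
        simp only [hf, if_pos, if_neg, h1, h2, if_true, if_false, Prod.mk.injEq] at heq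
      · exact heq.1
      · exact absurd heq.1 (ne_of_lt h1a)
      · exact absurd heq.1.symm (ne_of_lt h2a)
      · exact heq.2
    calc W2.ncard = (f '' W2).ncard := (Set.ncard_image_of_injOn hinj).symm
      _ ≤ (S : Set (Fin n × Fin n)).ncard := by
          exact Set.ncard_le_ncard (Set.image_subset_iff.mpr hmaps) (Set.toFinite _)
      _ = S.card := Set.ncard_coe_finset S
      _ ≤ k := hScard
  have hle : (Set.Ioo b a).ncard ≤ W1.ncard + W2.ncard :=
    le_trans (Set.ncard_le_ncard hsplit (Set.toFinite _)) (Set.ncard_union_le W1 W2)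
  have hfin : (a : ℕ) - b - 1 ≤ 2 * k := by
    rw [hWcard] at hle; omega
  have : (b : ℕ) < a := hba
  omega
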